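/- If f ∈ Aut(C³) commutes with h' = exp(D) and has third coordinate f₃ = z and scaling factor s = 1 in the decomposition f = (r + x + qy, y + qz, z) with r, q ∈ ker D, then f ∘ exp(qD)^{-1} = (x + r − (1/2)q²z, y, z). -/

import Mathlib

open MvPolynomial

noncomputable section

/-- The polynomial ring ℂ[x,y,z], with x = X 0, y = X 1, z = X 2. -/
abbrev R3 : Type := MvPolynomial (Fin 3) ℂ

/-- The derivation D = z·∂/∂y + y·∂/∂x, i.e. D x = y, D y = z, D z = 0. -/
def D : Derivation ℂ R3 R3 := mkDerivation ℂ ![X 1, X 2, 0]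

/-- p = xz - (1/2)y² -/
def p : R3 := X 0 * X 2 - C (1/2) * X 1 ^ 2

/-- The exponential automorphism exp(qD) of ℂ³ (for q ∈ ker D), given by its
closed formula: since D q = 0, (qD)x = qy, (qD)²x = q²z, (qD)³x = 0, so
exp(qD) = (x + qy + q²z/2, y + qz, z). -/
def expMap (q : R3) : (Fin 3 → ℂ) → (Fin 3 → ℂ) :=
  fun a => ![a 0 + eval a q * a 1 + eval a q ^ 2 * a 2 / 2,
             a 1 + eval a q * a 2, a 2]

/-- A map ℂ³ → ℂ³ given coordinatewise by polynomials. -/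
def IsPolyMap (F : (Fin 3 → ℂ) → (Fin 3 → ℂ)) : Prop :=
  ∃ f : Fin 3 → R3, ∀ a i, F a i = eval a (f i)

/-- A polynomial automorphism of ℂ³: a polynomial map with a polynomial inverse. -/
def IsPolyAut (F : (Fin 3 → ℂ) → (Fin 3 → ℂ)) : Prop :=
  IsPolyMap F ∧ ∃ G, IsPolyMap G ∧ F ∘ G = id ∧ G ∘ F = id

/-- h' = exp(D) : (x,y,z) ↦ (x + y + z/2, y + z, z). -/
def h'map : (Fin 3 → ℂ) → (Fin 3 → ℂ) :=
  fun a => ![a 0 + a 1 + a 2 / 2, a 1 + a 2, a 2]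

/-- Flow curve: coordinates of exp(tQD) applied to b, as polynomials in t. -/
def flow (b : Fin 3 → ℂ) (Q : ℂ) : Fin 3 → Polynomial ℂ :=
  ![Polynomial.C (b 0) + Polynomial.C (Q * b 1) * Polynomial.X
      + Polynomial.C (Q ^ 2 * b 2 / 2) * Polynomial.X ^ 2,
    Polynomial.C (b 1) + Polynomial.C (Q * b 2) * Polynomial.X,
    Polynomial.C (b 2)]

lemma flow_deriv (b : Fin 3 → ℂ) (Q : ℂ) (s : R3) :
    Polynomial.derivative (aeval (flow b Q) s)
      = Polynomial.C Q * aeval (flow b Q) (D s) := by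
  have hX : ∀ i : Fin 3, Polynomial.derivative (flow b Q i)
      = Polynomial.C Q * aeval (flow b Q) (D (X i)) := by
    intro i
    fin_cases i
    · simp only [flow, D, mkDerivation_X]
      simp [Polynomial.derivative_mul]
      rw [show (1:Polynomial ℂ) + 1 = Polynomial.C 2 by rw [map_ofNat]; norm_num, ← mul_assoc, ← map_mul Polynomial.C (Q ^ 2 * b 2 / 2),
        show Q ^ 2 * b 2 / 2 * (2:ℂ) = Q ^ 2 * b 2 by ring, map_mul, map_pow]
      ring
    · simp [flow, D, mkDerivation_X, Polynomial.derivative_mul, map_mul]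
    · simp [flow, D, mkDerivation_X]
  induction s using MvPolynomial.induction_on with
  | C c => simp
  | add f g hf hg => simp [hf, hg, mul_add]
  | mul_X f i hf =>
    have : D (f * X i) = f * D (X i) + X i * D f := by
      rw [Derivation.leibniz]; simp only [smul_eq_mul]; try ring
    rw [this]
    simp only [map_add, map_mul, aeval_X, Polynomial.derivative_mul, hf, hX i]
    try ring

lemma eval_flow (b : Fin 3 → ℂ) (Q : ℂ) (t : ℂ) (s : R3) :
    Polynomial.eval t (aeval (flow b Q) s)
      = eval (fun i => Polynomial.eval t (flow b Q i)) s := by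
  induction s using MvPolynomial.induction_on with
  | C c => simp
  | add f g hf hg => simp [hf, hg]
  | mul_X f i hf => simp [hf]

lemma eval_expMap_of_ker (q : R3) (b : Fin 3 → ℂ) (s : R3) (hs : D s = 0) :
    eval (expMap q b) s = eval b s := by
  set Q := eval b q with hQ
  have hder : Polynomial.derivative (aeval (flow b Q) s) = 0 := by
    rw [flow_deriv, hs]; simp
  obtain ⟨c, hc⟩ : ∃ c, aeval (flow b Q) s = Polynomial.C c :=
    ⟨_, Polynomial.eq_C_of_derivative_eq_zero hder⟩
  have h0 := eval_flow b Q 0 s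
  have h1 := eval_flow b Q 1 s
  rw [hc] at h0 h1
  simp only [Polynomial.eval_C] at h0 h1
  have e1 : (fun i => Polynomial.eval 1 (flow b Q i)) = expMap q b := by
    funext i; fin_cases i <;> simp [flow, expMap, hQ] <;> ring
  have e0 : (fun i => Polynomial.eval 0 (flow b Q i)) = b := by
    funext i; fin_cases i <;> simp [flow]
  rw [e1] at h1; rw [e0] at h0
  rw [← h1, ← h0]

/-- if f = (r + x + qy, y + qz, z) with r, q ∈ ker D, then
f ∘ exp(qD)⁻¹ = (x + r - (1/2)q²z, y, z). -/
theorem stmt_12 (r q : R3) (hr : D r = 0) (hq : D q = 0)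
    (G : (Fin 3 → ℂ) → (Fin 3 → ℂ))
    (hG₁ : expMap q ∘ G = id) (hG₂ : G ∘ expMap q = id) :
    (fun a : Fin 3 → ℂ =>
        ![a 0 + eval a r + eval a q * a 1, a 1 + eval a q * a 2, a 2]) ∘ G =
      fun a : Fin 3 → ℂ =>
        ![a 0 + eval a r - eval a q ^ 2 * a 2 / 2, a 1, a 2] := by
  funext a
  have hb : expMap q (G a) = a := congrFun hG₁ a
  set b := G a with hbdef
  have hq' : eval a q = eval b q := by rw [← hb]; exact eval_expMap_of_ker q b q hq
  have hr' : eval a r = eval b r := by rw [← hb]; exact eval_expMap_of_ker q b r hr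
  have h0 : a 0 = b 0 + eval b q * b 1 + eval b q ^ 2 * b 2 / 2 := by
    rw [← hb]; simp [expMap]
  have h1 : a 1 = b 1 + eval b q * b 2 := by rw [← hb]; simp [expMap]
  have h2 : a 2 = b 2 := by rw [← hb]; simp [expMap]
  simp only [Function.comp_apply]
  funext i
  fin_cases i <;> simp [hq', hr', h0, h1, h2] <;> ring
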